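/- arXiv:1910.03906 — 2 statements merged into one kernel-verified Lean document; each statement's English description precedes it below -/
import Mathlib

section
/- Let V be an r×r symmetric matrix, μ an r-vector, and η > 0 with μᵀVμ + η ≠ 0. Then the Kalman covariance update (V⊗I_d) − (V⊗I_d)Hᵀ[H(V⊗I_d)Hᵀ + η I_d]⁻¹ H(V⊗I_d), with H = μᵀ ⊗ I_d, equals (V − (VμμᵀV)/(μᵀVμ + η)) ⊗ I_d. That is, the Kronecker-with-identity covariance structure is preserved under the Kalman update with observation matrix μᵀ ⊗ I_d and isotropic noise. -/
open Matrix Kronecker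

lemma row_V_col_eq {r : ℕ} (V : Matrix (Fin r) (Fin r) ℝ) (μ : Fin r → ℝ) :
    Matrix.replicateRow Unit μ * V * Matrix.replicateCol Unit μ
      = (μ ⬝ᵥ V.mulVec μ) • (1 : Matrix Unit Unit ℝ) := by
  ext i j
  simp only [Matrix.mul_apply, dotProduct, Matrix.mulVec, Matrix.smul_apply,
    Matrix.one_apply_eq, smul_eq_mul, mul_one, Finset.sum_mul, Finset.mul_sum,
    Matrix.replicateRow_apply, Matrix.replicateCol_apply]
  rw [Finset.sum_comm]
  exact Finset.sum_congr rfl fun x _ => Finset.sum_congr rfl fun y _ => by ring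

/-- The Kalman covariance update with observation matrix `H = μᵀ ⊗ I_d` and isotropic noise
`η I_d` preserves the Kronecker-with-identity structure:
`(V⊗I) − (V⊗I)Hᵀ[H(V⊗I)Hᵀ + η I]⁻¹ H(V⊗I) = (V − VμμᵀV/(μᵀVμ + η)) ⊗ I`. -/
theorem kalman_covariance_update_kronecker {d r : ℕ}
    (V : Matrix (Fin r) (Fin r) ℝ) (hV : V.IsSymm) (μ : Fin r → ℝ) (η : ℝ)
    (hη : 0 < η) (hρ : μ ⬝ᵥ V.mulVec μ + η ≠ 0) :
    (V ⊗ₖ (1 : Matrix (Fin d) (Fin d) ℝ)) -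
        (V ⊗ₖ (1 : Matrix (Fin d) (Fin d) ℝ)) * (Matrix.replicateRow Unit μ ⊗ₖ (1 : Matrix (Fin d) (Fin d) ℝ))ᵀ *
          ((Matrix.replicateRow Unit μ ⊗ₖ (1 : Matrix (Fin d) (Fin d) ℝ)) * (V ⊗ₖ (1 : Matrix (Fin d) (Fin d) ℝ)) *
              (Matrix.replicateRow Unit μ ⊗ₖ (1 : Matrix (Fin d) (Fin d) ℝ))ᵀ + η • (1 : Matrix (Unit × Fin d) (Unit × Fin d) ℝ))⁻¹ *
          (Matrix.replicateRow Unit μ ⊗ₖ (1 : Matrix (Fin d) (Fin d) ℝ)) * (V ⊗ₖ (1 : Matrix (Fin d) (Fin d) ℝ))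
      = (V - (μ ⬝ᵥ V.mulVec μ + η)⁻¹ • (V * vecMulVec μ μ * V)) ⊗ₖ 1 := by
  set a : ℝ := μ ⬝ᵥ V.mulVec μ with ha
  have htr : (Matrix.replicateRow Unit μ ⊗ₖ (1 : Matrix (Fin d) (Fin d) ℝ))ᵀ
      = Matrix.replicateCol Unit μ ⊗ₖ (1 : Matrix (Fin d) (Fin d) ℝ) := by
    rw [← kroneckerMap_transpose, Matrix.transpose_replicateRow, Matrix.transpose_one]
  have hmid : (Matrix.replicateRow Unit μ ⊗ₖ (1 : Matrix (Fin d) (Fin d) ℝ)) * (V ⊗ₖ (1 : Matrix (Fin d) (Fin d) ℝ)) *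
      (Matrix.replicateRow Unit μ ⊗ₖ (1 : Matrix (Fin d) (Fin d) ℝ))ᵀ + η • (1 : Matrix (Unit × Fin d) (Unit × Fin d) ℝ)
      = (a + η) • (1 : Matrix (Unit × Fin d) (Unit × Fin d) ℝ) := by
    rw [htr, ← Matrix.mul_kronecker_mul, ← Matrix.mul_kronecker_mul, Matrix.mul_one,
      Matrix.mul_one, row_V_col_eq, Matrix.smul_kronecker, Matrix.one_kronecker_one, add_smul]
  have hinv : ((a + η) • (1 : Matrix (Unit × Fin d) (Unit × Fin d) ℝ))⁻¹
      = (a + η)⁻¹ • (1 : Matrix (Unit × Fin d) (Unit × Fin d) ℝ) := by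
    apply Matrix.inv_eq_right_inv
    rw [Matrix.smul_mul, Matrix.mul_smul, smul_smul, Matrix.mul_one,
      mul_inv_cancel₀ hρ, one_smul]
  rw [hmid, hinv, htr]
  rw [← Matrix.mul_kronecker_mul, Matrix.mul_one, Matrix.mul_smul, Matrix.smul_mul,
    Matrix.smul_mul, Matrix.mul_one, ← Matrix.mul_kronecker_mul, Matrix.mul_one,
    ← Matrix.mul_kronecker_mul, Matrix.mul_one, Matrix.vecMulVec_eq Unit]
  have hM : ∀ A B : Matrix (Fin r) (Fin r) ℝ,
      A = B → A ⊗ₖ (1 : Matrix (Fin d) (Fin d) ℝ) = B ⊗ₖ 1 := fun A B h => by rw [h]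
  ext ⟨i, k⟩ ⟨j, l⟩
  simp only [Matrix.sub_apply, Matrix.smul_apply, Matrix.kroneckerMap_apply,
    smul_eq_mul, sub_mul]
  rw [Matrix.mul_assoc V (Matrix.replicateCol Unit μ) (Matrix.replicateRow Unit μ)]
  ring
end

section
/- Let C₀ be a d×r matrix with c₀ = vec(C₀), V an r×r symmetric matrix, μ an r-vector, η > 0 with ρ := μᵀVμ + η ≠ 0, and y a d-vector. Then the Kalman mean update c₁ = c₀ + (V⊗I_d)Hᵀ[H(V⊗I_d)Hᵀ + η I_d]⁻¹(y − H c₀), with H = μᵀ ⊗ I_d, satisfies c₁ = vec(C₁) where C₁ = C₀ + (y − C₀μ) μᵀ Vᵀ / ρ. -/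
open Matrix Kronecker

/-- Column-stacking vectorization of a matrix: `vec M (j, i) = M i j`. -/
def vec {m n R : Type*} (M : Matrix m n R) : n × m → R := fun p => M p.2 p.1

/-- The Kalman mean update for the dictionary, in vectorized form, equals the vectorization of
the matrix-form update `C₁ = C₀ + (y − C₀μ) μᵀ Vᵀ / ρ`, where `ρ = μᵀVμ + η`. -/
theorem kalman_mean_update_matrix_form {d r : ℕ}
    (C₀ : Matrix (Fin d) (Fin r) ℝ) (V : Matrix (Fin r) (Fin r) ℝ) (hV : V.IsSymm)
    (μ : Fin r → ℝ) (η : ℝ) (hη : 0 < η) (y : Fin d → ℝ)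
    (hρ : μ ⬝ᵥ V.mulVec μ + η ≠ 0) :
    _root_.vec C₀ +
        ((V ⊗ₖ (1 : Matrix (Fin d) (Fin d) ℝ)) *
            (Matrix.replicateRow Unit μ ⊗ₖ (1 : Matrix (Fin d) (Fin d) ℝ))ᵀ *
            ((Matrix.replicateRow Unit μ ⊗ₖ (1 : Matrix (Fin d) (Fin d) ℝ)) * (V ⊗ₖ (1 : Matrix (Fin d) (Fin d) ℝ)) *
                (Matrix.replicateRow Unit μ ⊗ₖ (1 : Matrix (Fin d) (Fin d) ℝ))ᵀ + η • (1 : Matrix (Unit × Fin d) (Unit × Fin d) ℝ))⁻¹).mulVec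
          ((fun p : Unit × Fin d => y p.2) -
            (Matrix.replicateRow Unit μ ⊗ₖ (1 : Matrix (Fin d) (Fin d) ℝ)).mulVec (_root_.vec C₀))
      = _root_.vec (C₀ + (μ ⬝ᵥ V.mulVec μ + η)⁻¹ • vecMulVec (y - C₀.mulVec μ) (V.mulVec μ)) := by
  set ρ : ℝ := μ ⬝ᵥ V.mulVec μ + η with hρdef
  have hμV : Matrix.replicateRow Unit μ * V * (Matrix.replicateRow Unit μ)ᵀ
      = (μ ⬝ᵥ V.mulVec μ) • (1 : Matrix Unit Unit ℝ) := by
    ext u u'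
    simp [Matrix.mul_apply, Matrix.one_apply, dotProduct, Matrix.mulVec, Finset.sum_mul,
      Finset.mul_sum, mul_comm, mul_left_comm]
    rw [Finset.sum_comm]
    exact Finset.sum_congr rfl fun a _ => Finset.sum_congr rfl fun b _ => by
      rw [hV.apply]; ring
  have hHT : (Matrix.replicateRow Unit μ ⊗ₖ (1 : Matrix (Fin d) (Fin d) ℝ))ᵀ
      = (Matrix.replicateRow Unit μ)ᵀ ⊗ₖ (1 : Matrix (Fin d) (Fin d) ℝ) := by
    rw [← Matrix.kroneckerMap_transpose, Matrix.transpose_one]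
  have hbr : (Matrix.replicateRow Unit μ ⊗ₖ (1 : Matrix (Fin d) (Fin d) ℝ)) * (V ⊗ₖ (1 : Matrix (Fin d) (Fin d) ℝ)) *
      (Matrix.replicateRow Unit μ ⊗ₖ (1 : Matrix (Fin d) (Fin d) ℝ))ᵀ
      + η • (1 : Matrix (Unit × Fin d) (Unit × Fin d) ℝ)
      = ρ • (1 : Matrix (Unit × Fin d) (Unit × Fin d) ℝ) := by
    rw [hHT, ← Matrix.mul_kronecker_mul, ← Matrix.mul_kronecker_mul, Matrix.one_mul,
      Matrix.one_mul, hμV, Matrix.smul_kronecker, Matrix.one_kronecker_one, hρdef, add_smul]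
  have hinv : ((Matrix.replicateRow Unit μ ⊗ₖ (1 : Matrix (Fin d) (Fin d) ℝ)) * (V ⊗ₖ (1 : Matrix (Fin d) (Fin d) ℝ)) *
      (Matrix.replicateRow Unit μ ⊗ₖ (1 : Matrix (Fin d) (Fin d) ℝ))ᵀ
      + η • (1 : Matrix (Unit × Fin d) (Unit × Fin d) ℝ))⁻¹
      = ρ⁻¹ • (1 : Matrix (Unit × Fin d) (Unit × Fin d) ℝ) := by
    rw [hbr]
    refine Matrix.inv_eq_right_inv ?_
    rw [smul_mul_smul_comm, one_mul, mul_inv_cancel₀ hρ, one_smul]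
  rw [hinv, hHT]
  ext ⟨j, i⟩
  simp only [Pi.add_apply, Pi.sub_apply, Matrix.mulVec, dotProduct, _root_.vec,
    Matrix.add_apply, Matrix.smul_apply, Matrix.vecMulVec_apply, Matrix.mul_apply,
    Matrix.kroneckerMap_apply, Matrix.one_apply, Matrix.transpose_apply,
    Matrix.replicateRow_apply, smul_eq_mul, Fintype.sum_prod_type]
  simp only [mul_ite, mul_one, mul_zero, ite_mul, zero_mul, Finset.sum_ite_eq,
    Finset.sum_ite_eq', Finset.mem_univ, if_true, Finset.sum_const, Finset.card_univ,
    Fintype.card_unit, one_smul, Finset.mul_sum, Finset.sum_mul]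
  simp [Matrix.mulVec, dotProduct, Finset.mul_sum, Finset.sum_mul, Finset.sum_sub_distrib,
    mul_comm, mul_left_comm, mul_assoc, Pi.sub_apply]
end
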